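/- Let a > 0 and let N_T(t) = #{(j,k) ∈ ℤ² : π²(j² + k²)/a² ≤ t}. Then for every t ≥ 0: (i) #{(j,k) ∈ ℤ² : 0 ≤ j ≤ k, π²(j² + k²)/a² ≤ t} = (1/8)N_T(t) + (1/2)(⌊a√t/π⌋ + 1/2) + (1/2)(⌊a√t/(√2 π)⌋ + 1/2) + 3/8, and (ii) #{(j,k) ∈ ℤ² : 0 < j < k, π²(j² + k²)/a² ≤ t} = (1/8)N_T(t) − (1/2)(⌊a√t/π⌋ + 1/2) − (1/2)(⌊a√t/(√2 π)⌋ + 1/2) + 3/8. -/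

import Mathlib

open Real


lemma disk_finite (n : ℤ) : {p : ℤ × ℤ | p.1^2 + p.2^2 ≤ n}.Finite := by
  apply Set.Finite.subset (Set.finite_Icc ((-n, -n) : ℤ × ℤ) (n, n))
  rintro ⟨x, y⟩ h
  simp only [Set.mem_setOf_eq] at h
  simp only [Set.mem_Icc, Prod.le_def]
  refine ⟨⟨?_, ?_⟩, ?_, ?_⟩ <;> nlinarith [sq_nonneg x, sq_nonneg y, sq_nonneg (x-1), sq_nonneg (x+1), sq_nonneg (y-1), sq_nonneg (y+1)]

lemma key_count (n m l : ℤ) (hn : 0 ≤ n) (hm0 : 0 ≤ m) (hl0 : 0 ≤ l)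
    (hm : ∀ k : ℤ, 1 ≤ k → (k^2 ≤ n ↔ k ≤ m))
    (hl : ∀ k : ℤ, 1 ≤ k → (2*k^2 ≤ n ↔ k ≤ l)) :
    (({p : ℤ × ℤ | 0 ≤ p.1 ∧ p.1 ≤ p.2 ∧ p.1^2 + p.2^2 ≤ n}.ncard : ℤ)
      = ({p : ℤ × ℤ | 0 < p.1 ∧ p.1 < p.2 ∧ p.1^2 + p.2^2 ≤ n}.ncard : ℤ) + m + l + 1)
    ∧ (({p : ℤ × ℤ | p.1^2 + p.2^2 ≤ n}.ncard : ℤ)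
      = 8 * ({p : ℤ × ℤ | 0 < p.1 ∧ p.1 < p.2 ∧ p.1^2 + p.2^2 ≤ n}.ncard : ℤ)
        + 4*m + 4*l + 1) := by
  -- finiteness
  have fin : ∀ S : Set (ℤ × ℤ), S ⊆ {p : ℤ × ℤ | p.1^2 + p.2^2 ≤ n} → S.Finite :=
    fun S hS => (disk_finite n).subset hS
  -- named sets
  set SD : Set (ℤ × ℤ) := {p | 0 < p.1 ∧ p.1 < p.2 ∧ p.1^2 + p.2^2 ≤ n} with hSD
  set SD' : Set (ℤ × ℤ) := {p | 0 < p.2 ∧ p.2 < p.1 ∧ p.1^2 + p.2^2 ≤ n} with hSD'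
  set SA : Set (ℤ × ℤ) := {p | 0 ≤ p.1 ∧ p.1 ≤ p.2 ∧ p.1^2 + p.2^2 ≤ n} with hSA
  set Sax : Set (ℤ × ℤ) := {p | 1 ≤ p.1 ∧ p.2 = 0 ∧ p.1^2 + p.2^2 ≤ n} with hSax
  set Sax0 : Set (ℤ × ℤ) := {p | p.1 = 0 ∧ 0 ≤ p.2 ∧ p.1^2 + p.2^2 ≤ n} with hSax0
  set Sdg : Set (ℤ × ℤ) := {p | 1 ≤ p.1 ∧ p.1 = p.2 ∧ p.1^2 + p.2^2 ≤ n} with hSdg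
  set S1 : Set (ℤ × ℤ) := {p | 1 ≤ p.1 ∧ 0 ≤ p.2 ∧ p.1^2 + p.2^2 ≤ n} with hS1
  set R2 : Set (ℤ × ℤ) := {p | p.1 ≤ 0 ∧ 1 ≤ p.2 ∧ p.1^2 + p.2^2 ≤ n} with hR2
  set R3 : Set (ℤ × ℤ) := {p | p.1 ≤ -1 ∧ p.2 ≤ 0 ∧ p.1^2 + p.2^2 ≤ n} with hR3
  set R4 : Set (ℤ × ℤ) := {p | 0 ≤ p.1 ∧ p.2 ≤ -1 ∧ p.1^2 + p.2^2 ≤ n} with hR4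
  have finSD : SD.Finite := fin _ (fun p hp => hp.2.2)
  have finSD' : SD'.Finite := fin _ (fun p hp => hp.2.2)
  have finSA : SA.Finite := fin _ (fun p hp => hp.2.2)
  have finSax : Sax.Finite := fin _ (fun p hp => hp.2.2)
  have finSax0 : Sax0.Finite := fin _ (fun p hp => hp.2.2)
  have finSdg : Sdg.Finite := fin _ (fun p hp => hp.2.2)
  have finS1 : S1.Finite := fin _ (fun p hp => hp.2.2)
  have finR2 : R2.Finite := fin _ (fun p hp => hp.2.2)
  have finR3 : R3.Finite := fin _ (fun p hp => hp.2.2)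
  have finR4 : R4.Finite := fin _ (fun p hp => hp.2.2)
  -- axis count j=0, 0 ≤ k
  have cax0 : (Sax0.ncard : ℤ) = m + 1 := by
    have hset : Sax0 = (fun k : ℤ => ((0 : ℤ), k)) '' (Set.Icc 0 m) := by
      ext ⟨x, y⟩
      simp only [hSax0, Set.mem_setOf_eq, Set.mem_image, Set.mem_Icc, Prod.mk.injEq]
      constructor
      · rintro ⟨rfl, hy, hF⟩
        refine ⟨y, ⟨hy, ?_⟩, rfl, rfl⟩
        rcases eq_or_lt_of_le hy with h | h
        · omega
        · exact (hm y (by omega)).mp (by nlinarith)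
      · rintro ⟨k, ⟨hk0, hkm⟩, rfl, rfl⟩
        refine ⟨rfl, hk0, ?_⟩
        rcases eq_or_lt_of_le hk0 with h | h
        · nlinarith
        · have := (hm k (by omega)).mpr hkm
          nlinarith
    rw [hset, Set.ncard_image_of_injective _ (by intro a b h; simpa using h),
      ← Finset.coe_Icc, Set.ncard_coe_finset, Int.card_Icc]
    omega
  -- axis count k=0, 1 ≤ j
  have cax : (Sax.ncard : ℤ) = m := by
    have hset : Sax = (fun k : ℤ => (k, (0 : ℤ))) '' (Set.Icc 1 m) := by
      ext ⟨x, y⟩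
      simp only [hSax, Set.mem_setOf_eq, Set.mem_image, Set.mem_Icc, Prod.mk.injEq]
      constructor
      · rintro ⟨hx, rfl, hF⟩
        exact ⟨x, ⟨hx, (hm x hx).mp (by nlinarith)⟩, rfl, rfl⟩
      · rintro ⟨k, ⟨hk0, hkm⟩, rfl, rfl⟩
        have := (hm k hk0).mpr hkm
        exact ⟨hk0, rfl, by nlinarith⟩
    rw [hset, Set.ncard_image_of_injective _ (by intro a b h; simpa using h),
      ← Finset.coe_Icc, Set.ncard_coe_finset, Int.card_Icc]
    omega
  -- diagonal count
  have cdg : (Sdg.ncard : ℤ) = l := by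
    have hset : Sdg = (fun k : ℤ => (k, k)) '' (Set.Icc 1 l) := by
      ext ⟨x, y⟩
      simp only [hSdg, Set.mem_setOf_eq, Set.mem_image, Set.mem_Icc, Prod.mk.injEq]
      constructor
      · rintro ⟨hx, rfl, hF⟩
        exact ⟨x, ⟨hx, (hl x hx).mp (by nlinarith)⟩, rfl, rfl⟩
      · rintro ⟨k, ⟨hk0, hkm⟩, rfl, rfl⟩
        have := (hl k hk0).mpr hkm
        exact ⟨hk0, rfl, by nlinarith⟩
    rw [hset, Set.ncard_image_of_injective _ (by intro a b h; simpa [Prod.ext_iff] using h),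
      ← Finset.coe_Icc, Set.ncard_coe_finset, Int.card_Icc]
    omega
  -- swap
  have cswap : SD'.ncard = SD.ncard := by
    have hset : SD' = Prod.swap '' SD := by
      ext ⟨x, y⟩
      simp only [hSD, hSD', Set.mem_setOf_eq, Set.mem_image, Prod.swap, Prod.mk.injEq,
        Prod.exists]
      constructor
      · rintro ⟨h1, h2, hF⟩
        exact ⟨y, x, ⟨h1, h2, by linarith⟩, rfl, rfl⟩
      · rintro ⟨u, v, ⟨h1, h2, hF⟩, rfl, rfl⟩
        exact ⟨h1, h2, by linarith⟩
    rw [hset, Set.ncard_image_of_injective _ Prod.swap_injective]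
  -- rotations
  have crot : ∀ X Y : Set (ℤ × ℤ), Y = (fun p : ℤ × ℤ => (-p.2, p.1)) '' X →
      Y.ncard = X.ncard := by
    intro X Y h
    rw [h, Set.ncard_image_of_injective _ (by
      intro a b hab
      simp only [Prod.mk.injEq] at hab
      exact Prod.ext (hab.2) (by omega))]
  have cR2 : R2.ncard = S1.ncard := by
    apply crot
    ext ⟨x, y⟩
    simp only [hR2, hS1, Set.mem_setOf_eq, Set.mem_image, Prod.mk.injEq, Prod.exists]
    constructor
    · rintro ⟨h1, h2, hF⟩
      exact ⟨y, -x, ⟨h2, by omega, by nlinarith⟩, by omega, rfl⟩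
    · rintro ⟨u, v, ⟨h1, h2, hF⟩, rfl, rfl⟩
      exact ⟨by omega, h1, by nlinarith⟩
  have cR3 : R3.ncard = R2.ncard := by
    apply crot
    ext ⟨x, y⟩
    simp only [hR3, hR2, Set.mem_setOf_eq, Set.mem_image, Prod.mk.injEq, Prod.exists]
    constructor
    · rintro ⟨h1, h2, hF⟩
      exact ⟨y, -x, ⟨h2, by omega, by nlinarith⟩, by omega, rfl⟩
    · rintro ⟨u, v, ⟨h1, h2, hF⟩, rfl, rfl⟩
      exact ⟨by omega, h1, by nlinarith⟩
  have cR4 : R4.ncard = R3.ncard := by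
    apply crot
    ext ⟨x, y⟩
    simp only [hR4, hR3, Set.mem_setOf_eq, Set.mem_image, Prod.mk.injEq, Prod.exists]
    constructor
    · rintro ⟨h1, h2, hF⟩
      exact ⟨y, -x, ⟨h2, by omega, by nlinarith⟩, by omega, rfl⟩
    · rintro ⟨u, v, ⟨h1, h2, hF⟩, rfl, rfl⟩
      exact ⟨by omega, h1, by nlinarith⟩
  -- decomposition of the quarter S1 = SD ∪ SD' ∪ Sdg ∪ Sax
  have hq : S1.ncard = SD.ncard + SD'.ncard + Sdg.ncard + Sax.ncard := by
    have hU : S1 = (SD ∪ SD' ∪ Sdg) ∪ Sax := by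
      ext ⟨x, y⟩
      simp only [hS1, hSD, hSD', hSdg, hSax, Set.mem_setOf_eq, Set.mem_union]
      constructor
      · rintro ⟨h1, h2, hF⟩
        have hc : (0 < x ∧ x < y) ∨ (0 < y ∧ y < x) ∨ (1 ≤ x ∧ x = y)
            ∨ (1 ≤ x ∧ y = 0) := by omega
        rcases hc with c | c | c | c
        · exact Or.inl (Or.inl (Or.inl ⟨c.1, c.2, hF⟩))
        · exact Or.inl (Or.inl (Or.inr ⟨c.1, c.2, hF⟩))
        · exact Or.inl (Or.inr ⟨c.1, c.2, hF⟩)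
        · exact Or.inr ⟨c.1, c.2, hF⟩
      · rintro (((⟨h1, h2, hF⟩ | ⟨h1, h2, hF⟩) | ⟨h1, h2, hF⟩) | ⟨h1, h2, hF⟩) <;>
          exact ⟨by omega, by omega, hF⟩
    have d1 : Disjoint SD SD' := by
      rw [Set.disjoint_left]
      rintro ⟨x, y⟩ ⟨h1, h2, _⟩ ⟨h3, h4, _⟩
      omega
    have d2 : Disjoint (SD ∪ SD') Sdg := by
      rw [Set.disjoint_left]
      rintro ⟨x, y⟩ h1 ⟨h3, h4, _⟩
      rcases h1 with ⟨h1, h2, _⟩ | ⟨h1, h2, _⟩ <;> omega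
    have d3 : Disjoint (SD ∪ SD' ∪ Sdg) Sax := by
      rw [Set.disjoint_left]
      rintro ⟨x, y⟩ h1 ⟨h3, h4, _⟩
      rcases h1 with (⟨h1, h2, _⟩ | ⟨h1, h2, _⟩) | ⟨h1, h2, _⟩ <;> omega
    rw [hU, Set.ncard_union_eq d3 (((finSD.union finSD').union finSdg)) finSax,
      Set.ncard_union_eq d2 (finSD.union finSD') finSdg,
      Set.ncard_union_eq d1 finSD finSD']
  -- decomposition of SA
  have hA : SA.ncard = SD.ncard + Sax0.ncard + Sdg.ncard := by
    have hU : SA = (SD ∪ Sax0) ∪ Sdg := by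
      ext ⟨x, y⟩
      simp only [hSA, hSD, hSax0, hSdg, Set.mem_setOf_eq, Set.mem_union]
      constructor
      · rintro ⟨h1, h2, hF⟩
        have hc : (0 < x ∧ x < y) ∨ (x = 0 ∧ 0 ≤ y) ∨ (1 ≤ x ∧ x = y) := by omega
        rcases hc with c | c | c
        · exact Or.inl (Or.inl ⟨c.1, c.2, hF⟩)
        · exact Or.inl (Or.inr ⟨c.1, c.2, hF⟩)
        · exact Or.inr ⟨c.1, c.2, hF⟩
      · rintro ((⟨h1, h2, hF⟩ | ⟨h1, h2, hF⟩) | ⟨h1, h2, hF⟩) <;>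
          exact ⟨by omega, by omega, hF⟩
    have d1 : Disjoint SD Sax0 := by
      rw [Set.disjoint_left]
      rintro ⟨x, y⟩ ⟨h1, h2, _⟩ ⟨h3, h4, _⟩
      omega
    have d2 : Disjoint (SD ∪ Sax0) Sdg := by
      rw [Set.disjoint_left]
      rintro ⟨x, y⟩ h1 ⟨h3, h4, _⟩
      rcases h1 with ⟨h1, h2, _⟩ | ⟨h1, h2, _⟩ <;> omega
    rw [hU, Set.ncard_union_eq d2 (finSD.union finSax0) finSdg,
      Set.ncard_union_eq d1 finSD finSax0]
  -- decomposition of the full disk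
  have hfull : {p : ℤ × ℤ | p.1^2 + p.2^2 ≤ n}.ncard
      = S1.ncard + R2.ncard + R3.ncard + R4.ncard + 1 := by
    have hU : {p : ℤ × ℤ | p.1^2 + p.2^2 ≤ n}
        = (((S1 ∪ R2) ∪ R3) ∪ R4) ∪ {((0:ℤ),(0:ℤ))} := by
      ext ⟨x, y⟩
      simp only [hS1, hR2, hR3, hR4, Set.mem_setOf_eq, Set.mem_union,
        Set.mem_singleton_iff, Prod.mk.injEq]
      constructor
      · intro hF
        by_cases h0 : x = 0 ∧ y = 0
        · right; exact h0
        · left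
          have hc : (1 ≤ x ∧ 0 ≤ y) ∨ (x ≤ 0 ∧ 1 ≤ y) ∨ (x ≤ -1 ∧ y ≤ 0)
              ∨ (0 ≤ x ∧ y ≤ -1) := by omega
          rcases hc with c | c | c | c
          · exact Or.inl (Or.inl (Or.inl ⟨c.1, c.2, hF⟩))
          · exact Or.inl (Or.inl (Or.inr ⟨c.1, c.2, hF⟩))
          · exact Or.inl (Or.inr ⟨c.1, c.2, hF⟩)
          · exact Or.inr ⟨c.1, c.2, hF⟩
      · rintro ((((⟨_, _, hF⟩ | ⟨_, _, hF⟩) | ⟨_, _, hF⟩) | ⟨_, _, hF⟩) | ⟨rfl, rfl⟩)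
        · exact hF
        · exact hF
        · exact hF
        · exact hF
        · simpa using hn
    have d1 : Disjoint S1 R2 := by
      rw [Set.disjoint_left]
      rintro ⟨x, y⟩ ⟨h1, h2, _⟩ ⟨h3, h4, _⟩
      omega
    have d2 : Disjoint (S1 ∪ R2) R3 := by
      rw [Set.disjoint_left]
      rintro ⟨x, y⟩ h1 ⟨h3, h4, _⟩
      rcases h1 with ⟨h1, h2, _⟩ | ⟨h1, h2, _⟩ <;> omega
    have d3 : Disjoint ((S1 ∪ R2) ∪ R3) R4 := by
      rw [Set.disjoint_left]
      rintro ⟨x, y⟩ h1 ⟨h3, h4, _⟩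
      rcases h1 with (⟨h1, h2, _⟩ | ⟨h1, h2, _⟩) | ⟨h1, h2, _⟩ <;> omega
    have d4 : Disjoint (((S1 ∪ R2) ∪ R3) ∪ R4) {((0:ℤ),(0:ℤ))} := by
      rw [Set.disjoint_right]
      rintro ⟨x, y⟩ hx h1
      simp only [Set.mem_singleton_iff, Prod.mk.injEq] at hx
      obtain ⟨rfl, rfl⟩ := hx
      rcases h1 with ((⟨h1, h2, _⟩ | ⟨h1, h2, _⟩) | ⟨h1, h2, _⟩) | ⟨h1, h2, _⟩ <;> omega
    rw [hU, Set.ncard_union_eq d4 (((finS1.union finR2).union finR3).union finR4)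
        (Set.finite_singleton _),
      Set.ncard_union_eq d3 ((finS1.union finR2).union finR3) finR4,
      Set.ncard_union_eq d2 (finS1.union finR2) finR3,
      Set.ncard_union_eq d1 finS1 finR2, Set.ncard_singleton]
  constructor
  · have h1 : (SA.ncard : ℤ) = SD.ncard + Sax0.ncard + Sdg.ncard := by exact_mod_cast hA
    linarith [h1, cax0, cdg]
  · have h2 : ({p : ℤ × ℤ | p.1^2 + p.2^2 ≤ n}.ncard : ℤ)
        = S1.ncard + R2.ncard + R3.ncard + R4.ncard + 1 := by exact_mod_cast hfull
    have h3 : (S1.ncard : ℤ) = SD.ncard + SD'.ncard + Sdg.ncard + Sax.ncard := by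
      exact_mod_cast hq
    have h4 : (SD'.ncard : ℤ) = SD.ncard := by exact_mod_cast cswap
    have h5 : (R2.ncard : ℤ) = S1.ncard := by exact_mod_cast cR2
    have h6 : (R3.ncard : ℤ) = R2.ncard := by exact_mod_cast cR3
    have h7 : (R4.ncard : ℤ) = R3.ncard := by exact_mod_cast cR4
    linarith [h2, h3, h4, h5, h6, h7, cax, cdg]

/-- Lattice-point counting identities for the right isosceles triangle (half of a square
of side `a`): Neumann (sector `0 ≤ j ≤ k`) and Dirichlet (sector `0 < j < k`) counting
functions in terms of the full lattice count `N_T`. -/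
theorem right_isosceles_triangle_count (a : ℝ) (ha : 0 < a) (t : ℝ) (ht : 0 ≤ t) :
    (({p : ℤ × ℤ | 0 ≤ p.1 ∧ p.1 ≤ p.2 ∧
        π ^ 2 * ((p.1 : ℝ) ^ 2 + (p.2 : ℝ) ^ 2) / a ^ 2 ≤ t}.ncard : ℝ) =
      (1 / 8) * ({p : ℤ × ℤ |
          π ^ 2 * ((p.1 : ℝ) ^ 2 + (p.2 : ℝ) ^ 2) / a ^ 2 ≤ t}.ncard : ℝ)
        + (1 / 2) * ((⌊a * Real.sqrt t / π⌋ : ℝ) + 1 / 2)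
        + (1 / 2) * ((⌊a * Real.sqrt t / (Real.sqrt 2 * π)⌋ : ℝ) + 1 / 2) + 3 / 8)
    ∧
    (({p : ℤ × ℤ | 0 < p.1 ∧ p.1 < p.2 ∧
        π ^ 2 * ((p.1 : ℝ) ^ 2 + (p.2 : ℝ) ^ 2) / a ^ 2 ≤ t}.ncard : ℝ) =
      (1 / 8) * ({p : ℤ × ℤ |
          π ^ 2 * ((p.1 : ℝ) ^ 2 + (p.2 : ℝ) ^ 2) / a ^ 2 ≤ t}.ncard : ℝ)
        - (1 / 2) * ((⌊a * Real.sqrt t / π⌋ : ℝ) + 1 / 2)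
        - (1 / 2) * ((⌊a * Real.sqrt t / (Real.sqrt 2 * π)⌋ : ℝ) + 1 / 2) + 3 / 8) := by
  have hpi := Real.pi_pos
  have hst : 0 ≤ Real.sqrt t := Real.sqrt_nonneg t
  have hs2 : (0:ℝ) < Real.sqrt 2 := Real.sqrt_pos.mpr (by norm_num)
  set n : ℤ := ⌊a^2 * t / π^2⌋ with hn_def
  set m : ℤ := ⌊a * Real.sqrt t / π⌋ with hm_def
  set l : ℤ := ⌊a * Real.sqrt t / (Real.sqrt 2 * π)⌋ with hl_def
  have hrt : Real.sqrt t ^ 2 = t := Real.sq_sqrt ht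
  have hr2 : Real.sqrt 2 ^ 2 = 2 := Real.sq_sqrt (by norm_num)
  have hc2 : (a * Real.sqrt t / π) ^ 2 = a^2 * t / π^2 := by
    rw [div_pow, mul_pow, hrt]
  have hd2 : (a * Real.sqrt t / (Real.sqrt 2 * π)) ^ 2 = a^2 * t / (2 * π^2) := by
    rw [div_pow, mul_pow, mul_pow, hrt, hr2]
  have hn : 0 ≤ n := Int.floor_nonneg.mpr (by positivity)
  have hm0 : 0 ≤ m := Int.floor_nonneg.mpr (by positivity)
  have hl0 : 0 ≤ l := Int.floor_nonneg.mpr (by positivity)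
  have hm : ∀ k : ℤ, 1 ≤ k → (k^2 ≤ n ↔ k ≤ m) := by
    intro k hk
    rw [hn_def, hm_def, Int.le_floor, Int.le_floor]
    have hk1 : (1:ℝ) ≤ (k:ℝ) := by exact_mod_cast hk
    rw [← hc2]
    constructor
    · intro h
      push_cast at h
      by_contra hlt
      push_neg at hlt
      nlinarith [div_nonneg (mul_nonneg ha.le hst) hpi.le]
    · intro h
      push_cast
      nlinarith
  have hl : ∀ k : ℤ, 1 ≤ k → (2*k^2 ≤ n ↔ k ≤ l) := by
    intro k hk
    rw [hn_def, hl_def, Int.le_floor, Int.le_floor]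
    have hk1 : (1:ℝ) ≤ (k:ℝ) := by exact_mod_cast hk
    have key : a^2 * t / π^2 = 2 * (a * Real.sqrt t / (Real.sqrt 2 * π)) ^ 2 := by
      rw [hd2]; field_simp
    rw [key]
    constructor
    · intro h
      push_cast at h
      by_contra hlt
      push_neg at hlt
      nlinarith [div_nonneg (mul_nonneg ha.le hst) (mul_nonneg hs2.le hpi.le)]
    · intro h
      push_cast
      nlinarith
  have hcond : ∀ x y : ℤ, (π ^ 2 * ((x : ℝ) ^ 2 + (y : ℝ) ^ 2) / a ^ 2 ≤ t)
      ↔ (x^2 + y^2 ≤ n) := by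
    intro x y
    rw [hn_def, Int.le_floor]
    push_cast
    rw [div_le_iff₀ (by positivity : (0:ℝ) < a^2), le_div_iff₀ (by positivity : (0:ℝ) < π^2)]
    constructor <;> intro h <;> nlinarith
  have hset1 : {p : ℤ × ℤ | 0 ≤ p.1 ∧ p.1 ≤ p.2 ∧
      π ^ 2 * ((p.1 : ℝ) ^ 2 + (p.2 : ℝ) ^ 2) / a ^ 2 ≤ t}
      = {p : ℤ × ℤ | 0 ≤ p.1 ∧ p.1 ≤ p.2 ∧ p.1^2 + p.2^2 ≤ n} := by
    ext ⟨x, y⟩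
    simp only [Set.mem_setOf_eq, hcond x y]
  have hset2 : {p : ℤ × ℤ | 0 < p.1 ∧ p.1 < p.2 ∧
      π ^ 2 * ((p.1 : ℝ) ^ 2 + (p.2 : ℝ) ^ 2) / a ^ 2 ≤ t}
      = {p : ℤ × ℤ | 0 < p.1 ∧ p.1 < p.2 ∧ p.1^2 + p.2^2 ≤ n} := by
    ext ⟨x, y⟩
    simp only [Set.mem_setOf_eq, hcond x y]
  have hset3 : {p : ℤ × ℤ |
      π ^ 2 * ((p.1 : ℝ) ^ 2 + (p.2 : ℝ) ^ 2) / a ^ 2 ≤ t}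
      = {p : ℤ × ℤ | p.1^2 + p.2^2 ≤ n} := by
    ext ⟨x, y⟩
    simp only [Set.mem_setOf_eq, hcond x y]
  obtain ⟨e1, e2⟩ := key_count n m l hn hm0 hl0 hm hl
  have E1 : ({p : ℤ × ℤ | 0 ≤ p.1 ∧ p.1 ≤ p.2 ∧ p.1^2 + p.2^2 ≤ n}.ncard : ℝ)
      = ({p : ℤ × ℤ | 0 < p.1 ∧ p.1 < p.2 ∧ p.1^2 + p.2^2 ≤ n}.ncard : ℝ)
        + (m : ℝ) + (l : ℝ) + 1 := by exact_mod_cast e1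
  have E2 : (({p : ℤ × ℤ | p.1^2 + p.2^2 ≤ n}.ncard : ℝ))
      = 8 * ({p : ℤ × ℤ | 0 < p.1 ∧ p.1 < p.2 ∧ p.1^2 + p.2^2 ≤ n}.ncard : ℝ)
        + 4*(m : ℝ) + 4*(l : ℝ) + 1 := by exact_mod_cast e2
  rw [hset1, hset2, hset3]
  constructor <;> linarith
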